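/- With the standing setup for the time-weighted LP trajectory metric, assume in addition that every trajectory in the families X and Y is nonempty (i.e., for every i there exists a time k with X_i(k) ≠ none, and likewise for Y), and that the maps i ↦ X_i and j ↦ Y_j are injective. Then d̄(X, Y) = 0 if and only if nX = nY and the sets of trajectories coincide, i.e., {X_1, …, X_nX} = {Y_1, …, Y_nY} (equivalently, there is a bijection σ of the index sets with Y_{σ(i)} = X_i for all i). -/

import Mathlib

open Finset

noncomputable section

/-- The GOSPA base distance on `Option E`. -/
def dG {E : Type*} [MetricSpace E] (c p : ℝ) : Option E → Option E → ℝ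
  | some x, some y => min c (dist x y)
  | none, none => 0
  | _, _ => c / 2 ^ (1 / p)

/-- Relaxed assignment constraints for a soft-assignment matrix. -/
def Relaxed {m n : ℕ} (W : Matrix (Fin (m + 1)) (Fin (n + 1)) ℝ) : Prop :=
  (∀ i j, 0 ≤ W i j) ∧
  (∀ j : Fin n, ∑ i, W i j.castSucc = 1) ∧
  (∀ i : Fin m, ∑ j, W i.castSucc j = 1) ∧
  W (Fin.last m) (Fin.last n) = 0

/-- A matrix is binary if every entry is `0` or `1`. -/
def IsBinary {m n : ℕ} (W : Matrix (Fin (m + 1)) (Fin (n + 1)) ℝ) : Prop :=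
  ∀ i j, W i j = 0 ∨ W i j = 1

/-- Extend an indexed family of trajectories with an extra all-`none` trajectory. -/
def extTraj {E : Type*} {T n : ℕ} (X : Fin n → Fin T → Option E) :
    Fin (n + 1) → Fin T → Option E :=
  fun i => if h : (i : ℕ) < n then X ⟨i, h⟩ else fun _ => none

/-- The matrix `D^k_{X,Y}(i,j) = dG(X_i(k), Y_j(k))^p` of localisation costs at time `k`. -/
def Dmat {E : Type*} [MetricSpace E] (c p : ℝ) {T nX nY : ℕ}
    (X : Fin nX → Fin T → Option E) (Y : Fin nY → Fin T → Option E) (k : Fin T) :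
    Matrix (Fin (nX + 1)) (Fin (nY + 1)) ℝ :=
  fun i j => dG c p (extTraj X i k) (extTraj Y j k) ^ p

/-- The objective of the time-weighted LP trajectory metric for a sequence of
soft-assignment matrices `W`. -/
def obj {E : Type*} [MetricSpace E] (c p γ : ℝ) (w1 w2 : ℕ → ℝ) {T nX nY : ℕ}
    (X : Fin nX → Fin T → Option E) (Y : Fin nY → Fin T → Option E)
    (W : Fin T → Matrix (Fin (nX + 1)) (Fin (nY + 1)) ℝ) : ℝ :=
  (∑ k : Fin T, w1 k.1 * ∑ i, ∑ j, Dmat c p X Y k i j * W k i j +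
      γ ^ p / 2 * ∑ k : Fin (T - 1), w2 k.1 *
        ∑ i : Fin nX, ∑ j : Fin nY,
          |W ⟨k.1, by have := k.2; omega⟩ i.castSucc j.castSucc -
            W ⟨k.1 + 1, by have := k.2; omega⟩ i.castSucc j.castSucc|) ^ (1 / p)

/-- The time-weighted LP trajectory metric: infimum of the objective over all sequences of
matrices satisfying the relaxed assignment constraints. -/
def dbar {E : Type*} [MetricSpace E] (c p γ : ℝ) (w1 w2 : ℕ → ℝ) {T nX nY : ℕ}
    (X : Fin nX → Fin T → Option E) (Y : Fin nY → Fin T → Option E) : ℝ :=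
  ⨅ W : {W : Fin T → Matrix (Fin (nX + 1)) (Fin (nY + 1)) ℝ // ∀ k, Relaxed (W k)},
    obj c p γ w1 w2 X Y W.1

/-- The time-weighted multi-dimensional assignment metric: infimum of the objective over all
sequences of binary matrices satisfying the relaxed assignment constraints. -/
def dmd {E : Type*} [MetricSpace E] (c p γ : ℝ) (w1 w2 : ℕ → ℝ) {T nX nY : ℕ}
    (X : Fin nX → Fin T → Option E) (Y : Fin nY → Fin T → Option E) : ℝ :=
  ⨅ W : {W : Fin T → Matrix (Fin (nX + 1)) (Fin (nY + 1)) ℝ //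
      ∀ k, Relaxed (W k) ∧ IsBinary (W k)},
    obj c p γ w1 w2 X Y W.1

-- ===== auxiliary development =====
namespace GospaAux
variable {E : Type*} [MetricSpace E] {c p γ : ℝ} {T nX nY : ℕ}

lemma dG_self (hc : 0 ≤ c) (a : Option E) : dG c p a a = 0 := by
  cases a with
  | none => rfl
  | some x => simp [dG, hc]

lemma dG_nonneg (hc : 0 ≤ c) (a b : Option E) : 0 ≤ dG c p a b := by
  have h2 : (0:ℝ) < 2 ^ (1/p) := Real.rpow_pos_of_pos (by norm_num) _
  cases a <;> cases b <;> simp [dG, hc, dist_nonneg, le_div_iff₀ h2] <;> positivity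

lemma dG_pos (hc : 0 < c) {a b : Option E} (h : a ≠ b) : 0 < dG c p a b := by
  have h2 : (0:ℝ) < 2 ^ (1/p) := Real.rpow_pos_of_pos (by norm_num) _
  cases a <;> cases b <;> simp_all [dG, hc, lt_min_iff, div_pos hc h2]

lemma dG_comm (a b : Option E) : dG c p a b = dG c p b a := by
  cases a <;> cases b <;> simp [dG, dist_comm]

lemma extTraj_castSucc (X : Fin nX → Fin T → Option E) (i : Fin nX) :
    extTraj X i.castSucc = X i := by
  simp [extTraj, i.is_lt]

lemma extTraj_last (X : Fin nX → Fin T → Option E) :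
    extTraj X (Fin.last nX) = fun _ => none := by
  simp [extTraj]

lemma Dmat_nonneg (hc : 0 ≤ c) (X : Fin nX → Fin T → Option E)
    (Y : Fin nY → Fin T → Option E) (k : Fin T) (i j) :
    0 ≤ Dmat c p X Y k i j :=
  Real.rpow_nonneg (dG_nonneg hc _ _) p

/-- the `p`-th power of the objective -/
def Fobj (c p γ : ℝ) (w1 w2 : ℕ → ℝ) {T nX nY : ℕ} (X : Fin nX → Fin T → Option E)
    (Y : Fin nY → Fin T → Option E)
    (W : Fin T → Matrix (Fin (nX + 1)) (Fin (nY + 1)) ℝ) : ℝ :=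
  ∑ k : Fin T, w1 k.1 * ∑ i, ∑ j, Dmat c p X Y k i j * W k i j +
      γ ^ p / 2 * ∑ k : Fin (T - 1), w2 k.1 *
        ∑ i : Fin nX, ∑ j : Fin nY,
          |W ⟨k.1, by have := k.2; omega⟩ i.castSucc j.castSucc -
            W ⟨k.1 + 1, by have := k.2; omega⟩ i.castSucc j.castSucc|

lemma obj_eq_Fobj (w1 w2 : ℕ → ℝ) (X : Fin nX → Fin T → Option E)
    (Y : Fin nY → Fin T → Option E) (W) :
    obj c p γ w1 w2 X Y W = Fobj c p γ w1 w2 X Y W ^ (1/p) := rfl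

variable (hc : 0 < c) (hγ : 0 < γ)
variable {w1 w2 : ℕ → ℝ} (hw1 : ∀ k < T, 0 < w1 k) (hw2 : ∀ k < T - 1, 0 < w2 k)
variable {X : Fin nX → Fin T → Option E} {Y : Fin nY → Fin T → Option E}
variable {W : Fin T → Matrix (Fin (nX + 1)) (Fin (nY + 1)) ℝ}

section
include hc hγ hw1 hw2

lemma Fobj_nonneg (hW : ∀ k, Relaxed (W k)) : 0 ≤ Fobj c p γ w1 w2 X Y W := by
  apply add_nonneg
  · refine Finset.sum_nonneg fun k _ => mul_nonneg (hw1 k.1 k.2).le ?_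
    refine Finset.sum_nonneg fun i _ => Finset.sum_nonneg fun j _ =>
      mul_nonneg (Dmat_nonneg hc.le _ _ _ _ _) ((hW k).1 i j)
  · refine mul_nonneg (by positivity) ?_
    refine Finset.sum_nonneg fun k _ => mul_nonneg (hw2 k.1 k.2).le ?_
    exact Finset.sum_nonneg fun i _ => Finset.sum_nonneg fun j _ => abs_nonneg _

lemma term1_le (hW : ∀ k, Relaxed (W k)) (k : Fin T) (i : Fin (nX+1)) (j : Fin (nY+1)) :
    w1 k.1 * (Dmat c p X Y k i j * W k i j) ≤ Fobj c p γ w1 w2 X Y W := by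
  have hterm : ∀ k' : Fin T, ∀ i' j', 0 ≤ Dmat c p X Y k' i' j' * W k' i' j' :=
    fun k' i' j' => mul_nonneg (Dmat_nonneg hc.le _ _ _ _ _) ((hW k').1 i' j')
  have h1 : Dmat c p X Y k i j * W k i j ≤ ∑ i', ∑ j', Dmat c p X Y k i' j' * W k i' j' := by
    calc Dmat c p X Y k i j * W k i j
        ≤ ∑ j', Dmat c p X Y k i j' * W k i j' :=
          Finset.single_le_sum (fun j' _ => hterm k i j') (mem_univ j)
      _ ≤ ∑ i', ∑ j', Dmat c p X Y k i' j' * W k i' j' :=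
          Finset.single_le_sum (fun i' _ => Finset.sum_nonneg fun j' _ => hterm k i' j')
            (mem_univ i)
  have h2 : w1 k.1 * (Dmat c p X Y k i j * W k i j) ≤
      ∑ k' : Fin T, w1 k'.1 * ∑ i', ∑ j', Dmat c p X Y k' i' j' * W k' i' j' := by
    calc w1 k.1 * (Dmat c p X Y k i j * W k i j)
        ≤ w1 k.1 * ∑ i', ∑ j', Dmat c p X Y k i' j' * W k i' j' :=
          mul_le_mul_of_nonneg_left h1 (hw1 k.1 k.2).le
      _ ≤ _ := Finset.single_le_sum
          (fun k' _ => mul_nonneg (hw1 k'.1 k'.2).le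
            (Finset.sum_nonneg fun i' _ => Finset.sum_nonneg fun j' _ => hterm k' i' j'))
          (mem_univ k)
  refine h2.trans (le_add_of_nonneg_right ?_)
  refine mul_nonneg (by positivity) ?_
  exact Finset.sum_nonneg fun k' _ => mul_nonneg (hw2 k'.1 k'.2).le
    (Finset.sum_nonneg fun i' _ => Finset.sum_nonneg fun j' _ => abs_nonneg _)

lemma term2_le (hW : ∀ k, Relaxed (W k)) (k : Fin (T-1)) (i : Fin nX) (j : Fin nY) :
    γ ^ p / 2 * (w2 k.1 * |W ⟨k.1, by have := k.2; omega⟩ i.castSucc j.castSucc -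
      W ⟨k.1 + 1, by have := k.2; omega⟩ i.castSucc j.castSucc|) ≤
      Fobj c p γ w1 w2 X Y W := by
  have habs : ∀ (k' : Fin (T-1)), 0 ≤ w2 k'.1 *
      ∑ i' : Fin nX, ∑ j' : Fin nY,
        |W ⟨k'.1, by have := k'.2; omega⟩ i'.castSucc j'.castSucc -
          W ⟨k'.1 + 1, by have := k'.2; omega⟩ i'.castSucc j'.castSucc| :=
    fun k' => mul_nonneg (hw2 k'.1 k'.2).le
      (Finset.sum_nonneg fun _ _ => Finset.sum_nonneg fun _ _ => abs_nonneg _)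
  have h1 : |W ⟨k.1, by have := k.2; omega⟩ i.castSucc j.castSucc -
        W ⟨k.1 + 1, by have := k.2; omega⟩ i.castSucc j.castSucc| ≤
      ∑ i' : Fin nX, ∑ j' : Fin nY,
        |W ⟨k.1, by have := k.2; omega⟩ i'.castSucc j'.castSucc -
          W ⟨k.1 + 1, by have := k.2; omega⟩ i'.castSucc j'.castSucc| := by
    calc _ ≤ ∑ j' : Fin nY, |W ⟨k.1, by have := k.2; omega⟩ i.castSucc j'.castSucc -
          W ⟨k.1 + 1, by have := k.2; omega⟩ i.castSucc j'.castSucc| :=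
          Finset.single_le_sum (fun _ _ => abs_nonneg _) (mem_univ j)
      _ ≤ _ := Finset.single_le_sum
          (f := fun i' : Fin nX => ∑ j' : Fin nY,
            |W ⟨k.1, by have := k.2; omega⟩ i'.castSucc j'.castSucc -
              W ⟨k.1 + 1, by have := k.2; omega⟩ i'.castSucc j'.castSucc|)
          (fun _ _ => Finset.sum_nonneg fun _ _ => abs_nonneg _) (mem_univ i)
  have h2 : w2 k.1 * |W ⟨k.1, by have := k.2; omega⟩ i.castSucc j.castSucc -
        W ⟨k.1 + 1, by have := k.2; omega⟩ i.castSucc j.castSucc| ≤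
      ∑ k' : Fin (T-1), w2 k'.1 *
        ∑ i' : Fin nX, ∑ j' : Fin nY,
          |W ⟨k'.1, by have := k'.2; omega⟩ i'.castSucc j'.castSucc -
            W ⟨k'.1 + 1, by have := k'.2; omega⟩ i'.castSucc j'.castSucc| := by
    calc _ ≤ w2 k.1 * ∑ i' : Fin nX, ∑ j' : Fin nY,
          |W ⟨k.1, by have := k.2; omega⟩ i'.castSucc j'.castSucc -
            W ⟨k.1 + 1, by have := k.2; omega⟩ i'.castSucc j'.castSucc| :=
          mul_le_mul_of_nonneg_left h1 (hw2 k.1 k.2).le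
      _ ≤ _ := Finset.single_le_sum (fun k' _ => habs k') (mem_univ k)
  have hgp : (0:ℝ) ≤ γ ^ p / 2 := by positivity
  have := mul_le_mul_of_nonneg_left h2 hgp
  refine this.trans (le_add_of_nonneg_left ?_)
  refine Finset.sum_nonneg fun k' _ => mul_nonneg (hw1 k'.1 k'.2).le ?_
  exact Finset.sum_nonneg fun i' _ => Finset.sum_nonneg fun j' _ =>
    mul_nonneg (Dmat_nonneg hc.le _ _ _ _ _) ((hW k').1 i' j')

end
end GospaAux

namespace GospaAux
variable {E : Type*} [MetricSpace E] {c p γ : ℝ} {T nX nY : ℕ}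
variable {w1 w2 : ℕ → ℝ}
variable {X : Fin nX → Fin T → Option E} {Y : Fin nY → Fin T → Option E}
variable {W : Fin T → Matrix (Fin (nX + 1)) (Fin (nY + 1)) ℝ}

lemma abs_tele (a : ℕ → ℝ) (m n : ℕ) (h : m ≤ n) :
    |a n - a m| ≤ ∑ t ∈ Finset.Ico m n, |a (t+1) - a t| := by
  induction n, h using Nat.le_induction with
  | base => simp
  | succ n hmn ih =>
    rw [Finset.sum_Ico_succ_top (by omega : m ≤ n)]
    have h1 : |a (n+1) - a m| ≤ |a n - a m| + |a (n+1) - a n| := by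
      calc |a (n+1) - a m| = |(a n - a m) + (a (n+1) - a n)| := by ring_nf
        _ ≤ |a n - a m| + |a (n+1) - a n| := abs_add_le _ _
    linarith

lemma diff_le (hc : 0 < c) (hγ : 0 < γ) (hw1 : ∀ k < T, 0 < w1 k)
    (hw2 : ∀ k < T - 1, 0 < w2 k) (hW : ∀ k, Relaxed (W k))
    (k k' : Fin T) (i : Fin nX) (j : Fin nY) :
    |W k i.castSucc j.castSucc - W k' i.castSucc j.castSucc| ≤
      (∑ m : Fin (T-1), 2/(γ^p * w2 m.1)) * Fobj c p γ w1 w2 X Y W := by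
  have key : ∀ k k' : Fin T, k.1 ≤ k'.1 →
      |W k' i.castSucc j.castSucc - W k i.castSucc j.castSucc| ≤
        (∑ m : Fin (T-1), 2/(γ^p * w2 m.1)) * Fobj c p γ w1 w2 X Y W := by
    intro k k' hkk
    set a : ℕ → ℝ := fun t => if h : t < T then W ⟨t, h⟩ i.castSucc j.castSucc else 0 with ha
    have hak : ∀ (k : Fin T), a k.1 = W k i.castSucc j.castSucc := by
      intro k; simp [ha, k.2]
    rw [← hak k, ← hak k']
    calc |a k'.1 - a k.1| ≤ ∑ t ∈ Finset.Ico k.1 k'.1, |a (t+1) - a t| :=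
          abs_tele a _ _ hkk
      _ ≤ ∑ t ∈ Finset.range (T-1), |a (t+1) - a t| := by
          refine Finset.sum_le_sum_of_subset_of_nonneg ?_ fun _ _ _ => abs_nonneg _
          intro t ht
          rw [Finset.mem_Ico] at ht
          rw [Finset.mem_range]
          have := k'.2
          omega
      _ = ∑ m : Fin (T-1), |a (m.1+1) - a m.1| := (Fin.sum_univ_eq_sum_range _ _).symm
      _ ≤ ∑ m : Fin (T-1), (2/(γ^p * w2 m.1)) * Fobj c p γ w1 w2 X Y W := by
          refine Finset.sum_le_sum fun m _ => ?_
          have h1 : m.1 < T := by have := m.2; omega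
          have h2 : m.1 + 1 < T := by have := m.2; omega
          have he : a (m.1+1) - a m.1 =
              W ⟨m.1+1, h2⟩ i.castSucc j.castSucc - W ⟨m.1, h1⟩ i.castSucc j.castSucc := by
            simp [ha, h1, h2]
          rw [he, abs_sub_comm]
          have ht := term2_le (p := p) (X := X) (Y := Y) hc hγ hw1 hw2 hW m i j
          set d := |W ⟨m.1, h1⟩ i.castSucc j.castSucc - W ⟨m.1+1, h2⟩ i.castSucc j.castSucc|
            with hd
          have hgp : 0 < γ^p := Real.rpow_pos_of_pos hγ p
          have hw2m := hw2 m.1 m.2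
          have h3 : (γ^p/2 * w2 m.1) * d ≤ Fobj c p γ w1 w2 X Y W := by
            rw [mul_assoc]; exact ht
          have h4 : d ≤ Fobj c p γ w1 w2 X Y W / (γ^p/2 * w2 m.1) :=
            (le_div_iff₀ (by positivity)).mpr (by rw [mul_comm]; exact h3)
          calc d ≤ Fobj c p γ w1 w2 X Y W / (γ^p/2 * w2 m.1) := h4
            _ = 2/(γ^p * w2 m.1) * Fobj c p γ w1 w2 X Y W := by
                field_simp
      _ = (∑ m : Fin (T-1), 2/(γ^p * w2 m.1)) * Fobj c p γ w1 w2 X Y W :=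
          (Finset.sum_mul _ _ _).symm
  rcases le_total k.1 k'.1 with h | h
  · rw [abs_sub_comm]; exact key k k' h
  · exact key k' k h

lemma exists_match (hc : 0 < c) (hγ : 0 < γ) (hw1 : ∀ k < T, 0 < w1 k)
    (hw2 : ∀ k < T - 1, 0 < w2 k)
    (hsmall : ∀ δ > 0, ∃ W' : Fin T → Matrix (Fin (nX + 1)) (Fin (nY + 1)) ℝ,
      (∀ k, Relaxed (W' k)) ∧ Fobj c p γ w1 w2 X Y W' < δ)
    (i : Fin nX) (k0 : Fin T) (hk0 : X i k0 ≠ none) :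
    ∃ j, Y j = X i := by
  by_contra hno
  push_neg at hno
  have hbad : ∀ j : Fin nY, ∃ k1 : Fin T,
      0 < w1 k1.1 * Dmat c p X Y k1 i.castSucc j.castSucc := by
    intro j
    have hXY : X i ≠ Y j := fun h => (hno j) (h.symm)
    obtain ⟨k1, hk1⟩ := Function.ne_iff.mp hXY
    refine ⟨k1, mul_pos (hw1 k1.1 k1.2) ?_⟩
    have hD : Dmat c p X Y k1 i.castSucc j.castSucc = dG c p (X i k1) (Y j k1) ^ p := by
      simp [Dmat, extTraj_castSucc]
    rw [hD]; exact Real.rpow_pos_of_pos (dG_pos hc hk1) p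
  choose k1 hk1 using hbad
  set B : ℝ := ∑ m : Fin (T-1), 2/(γ^p * w2 m.1) with hB
  have hgp : 0 < γ^p := Real.rpow_pos_of_pos hγ p
  have hB0 : 0 ≤ B := Finset.sum_nonneg fun m _ => by
    have := hw2 m.1 m.2; positivity
  have hcN : 0 < w1 k0.1 * Dmat c p X Y k0 i.castSucc (Fin.last nY) := by
    refine mul_pos (hw1 k0.1 k0.2) ?_
    have hD : Dmat c p X Y k0 i.castSucc (Fin.last nY) = dG c p (X i k0) none ^ p := by
      simp [Dmat, extTraj_castSucc, extTraj_last]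
    rw [hD]; exact Real.rpow_pos_of_pos (dG_pos hc hk0) p
  set C : ℝ := 1/(w1 k0.1 * Dmat c p X Y k0 i.castSucc (Fin.last nY)) +
      ∑ j : Fin nY, (1/(w1 (k1 j).1 * Dmat c p X Y (k1 j) i.castSucc j.castSucc) + B)
    with hC
  have hC0 : 0 < C := by
    refine add_pos_of_pos_of_nonneg (by positivity) ?_
    exact Finset.sum_nonneg fun j _ => add_nonneg (by have := hk1 j; positivity) hB0
  obtain ⟨W, hW, hF⟩ := hsmall (1/(2*C)) (by positivity)
  have hF0 : 0 ≤ Fobj c p γ w1 w2 X Y W := Fobj_nonneg hc hγ hw1 hw2 hW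
  have entry_le : ∀ (k : Fin T) (jj : Fin (nY+1)),
      0 < w1 k.1 * Dmat c p X Y k i.castSucc jj →
      W k i.castSucc jj ≤ 1/(w1 k.1 * Dmat c p X Y k i.castSucc jj) *
        Fobj c p γ w1 w2 X Y W := by
    intro k jj hpos
    have h := term1_le (p := p) (X := X) (Y := Y) hc hγ hw1 hw2 hW k i.castSucc jj
    have h' : (w1 k.1 * Dmat c p X Y k i.castSucc jj) * W k i.castSucc jj ≤
        Fobj c p γ w1 w2 X Y W := by rw [mul_assoc]; exact h
    rw [one_div, inv_mul_eq_div]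
    exact (le_div_iff₀ hpos).mpr (by rw [mul_comm]; exact h')
  have hlastb := entry_le k0 (Fin.last nY) hcN
  have hjb : ∀ j : Fin nY, W k0 i.castSucc j.castSucc ≤
      (1/(w1 (k1 j).1 * Dmat c p X Y (k1 j) i.castSucc j.castSucc) + B) *
        Fobj c p γ w1 w2 X Y W := by
    intro j
    have h1 := entry_le (k1 j) j.castSucc (hk1 j)
    have h2 := diff_le (p := p) (X := X) (Y := Y) hc hγ hw1 hw2 hW k0 (k1 j) i j
    have h3 := le_abs_self (W k0 i.castSucc j.castSucc - W (k1 j) i.castSucc j.castSucc)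
    have hexp : (1/(w1 (k1 j).1 * Dmat c p X Y (k1 j) i.castSucc j.castSucc) + B) *
        Fobj c p γ w1 w2 X Y W =
        1/(w1 (k1 j).1 * Dmat c p X Y (k1 j) i.castSucc j.castSucc) *
          Fobj c p γ w1 w2 X Y W + B * Fobj c p γ w1 w2 X Y W := by ring
    rw [hexp]
    rw [← hB] at h2
    linarith
  have hrow := (hW k0).2.2.1 i
  rw [Fin.sum_univ_castSucc] at hrow
  have hs : ∑ j : Fin nY, W k0 i.castSucc j.castSucc ≤
      (∑ j : Fin nY, (1/(w1 (k1 j).1 * Dmat c p X Y (k1 j) i.castSucc j.castSucc) + B)) *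
        Fobj c p γ w1 w2 X Y W := by
    rw [Finset.sum_mul]
    exact Finset.sum_le_sum fun j _ => hjb j
  have hsum : (1:ℝ) ≤ C * Fobj c p γ w1 w2 X Y W := by
    calc (1:ℝ) = _ := hrow.symm
      _ ≤ (∑ j : Fin nY, (1/(w1 (k1 j).1 * Dmat c p X Y (k1 j) i.castSucc j.castSucc) + B)) *
            Fobj c p γ w1 w2 X Y W +
          1/(w1 k0.1 * Dmat c p X Y k0 i.castSucc (Fin.last nY)) *
            Fobj c p γ w1 w2 X Y W := add_le_add hs hlastb
      _ = C * Fobj c p γ w1 w2 X Y W := by rw [hC]; ring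
  have hlt : C * Fobj c p γ w1 w2 X Y W < C * (1/(2*C)) :=
    mul_lt_mul_of_pos_left hF hC0
  have heq : C * (1/(2*C)) = 1/2 := by field_simp
  linarith

end GospaAux

namespace GospaAux
variable {E : Type*} [MetricSpace E] {c p γ : ℝ} {T nX nY : ℕ}
variable {w1 w2 : ℕ → ℝ}
variable {X : Fin nX → Fin T → Option E} {Y : Fin nY → Fin T → Option E}

open Matrix in
lemma Relaxed.transpose {m n : ℕ} {A : Matrix (Fin (m + 1)) (Fin (n + 1)) ℝ}
    (h : Relaxed A) : Relaxed Aᵀ :=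
  ⟨fun i j => h.1 j i, h.2.2.1, h.2.1, h.2.2.2⟩

open Matrix in
lemma Fobj_transpose (W : Fin T → Matrix (Fin (nX + 1)) (Fin (nY + 1)) ℝ) :
    Fobj c p γ w1 w2 Y X (fun k => (W k)ᵀ) = Fobj c p γ w1 w2 X Y W := by
  unfold Fobj
  congr 1
  · refine Finset.sum_congr rfl fun k _ => ?_
    congr 1
    rw [Finset.sum_comm]
    refine Finset.sum_congr rfl fun i _ => Finset.sum_congr rfl fun j _ => ?_
    simp [Matrix.transpose_apply, Dmat, dG_comm]
  · congr 1
    refine Finset.sum_congr rfl fun k _ => ?_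
    congr 1
    rw [Finset.sum_comm]
    rfl

/-- the all-to-dummy assignment is feasible -/
lemma relaxed_dummy :
    Relaxed (fun (i : Fin (nX+1)) (j : Fin (nY+1)) =>
      if (i:ℕ) < nX then (if j = Fin.last nY then (1:ℝ) else 0)
      else (if j = Fin.last nY then 0 else 1)) := by
  refine ⟨fun i j => ?_, fun j => ?_, fun i => ?_, ?_⟩
  · dsimp only; split_ifs <;> norm_num
  · have hne : j.castSucc ≠ Fin.last nY := (Fin.castSucc_lt_last j).ne
    rw [Fin.sum_univ_castSucc]
    simp [hne, Fin.is_lt]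
  · have hlt : ((i.castSucc : Fin (nX+1)) : ℕ) < nX := i.is_lt
    simp only [hlt, if_true]
    simp
  · simp

end GospaAux

open GospaAux

/-- Identity of indiscernibles for the time-weighted LP trajectory metric: for families of
nonempty trajectories with no repetitions, the metric vanishes if and only if the two sets of
trajectories coincide (i.e. the families agree up to a bijection of the index sets). -/
theorem dbar_eq_zero_iff {E : Type*} [MetricSpace E] {T nX nY : ℕ}
    (c p γ : ℝ) (hc : 0 < c) (hp : 1 ≤ p) (hγ : 0 < γ)
    (w1 w2 : ℕ → ℝ) (hw1 : ∀ k < T, 0 < w1 k) (hw2 : ∀ k < T - 1, 0 < w2 k)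
    (X : Fin nX → Fin T → Option E) (Y : Fin nY → Fin T → Option E)
    (hXne : ∀ i, ∃ k, X i k ≠ none) (hYne : ∀ j, ∃ k, Y j k ≠ none)
    (hXinj : Function.Injective X) (hYinj : Function.Injective Y) :
    dbar c p γ w1 w2 X Y = 0 ↔ ∃ σ : Fin nX ≃ Fin nY, ∀ i, Y (σ i) = X i := by
  classical
  have hp0 : 0 < p := lt_of_lt_of_le one_pos hp
  have hinvp : (0:ℝ) < 1/p := by positivity
  have hNE : Nonempty {W : Fin T → Matrix (Fin (nX + 1)) (Fin (nY + 1)) ℝ //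
      ∀ k, Relaxed (W k)} := ⟨⟨fun _ => _, fun _ => relaxed_dummy⟩⟩
  have hobj_nonneg : ∀ (W : {W : Fin T → Matrix (Fin (nX + 1)) (Fin (nY + 1)) ℝ //
      ∀ k, Relaxed (W k)}), 0 ≤ obj c p γ w1 w2 X Y W.1 := by
    intro W
    rw [obj_eq_Fobj]
    exact Real.rpow_nonneg (Fobj_nonneg hc hγ hw1 hw2 W.2) _
  constructor
  · intro h0
    have hsmall : ∀ δ > 0, ∃ W' : Fin T → Matrix (Fin (nX + 1)) (Fin (nY + 1)) ℝ,
        (∀ k, Relaxed (W' k)) ∧ Fobj c p γ w1 w2 X Y W' < δ := by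
      intro δ hδ
      have hlt : dbar c p γ w1 w2 X Y < δ ^ (1/p) := by
        rw [h0]; exact Real.rpow_pos_of_pos hδ _
      obtain ⟨⟨W', hW'⟩, hWlt⟩ := exists_lt_of_ciInf_lt hlt
      refine ⟨W', hW', ?_⟩
      by_contra hge
      push_neg at hge
      have : δ ^ (1/p) ≤ Fobj c p γ w1 w2 X Y W' ^ (1/p) :=
        Real.rpow_le_rpow hδ.le hge hinvp.le
      rw [obj_eq_Fobj] at hWlt
      linarith
    have hsmallT : ∀ δ > 0, ∃ W' : Fin T → Matrix (Fin (nY + 1)) (Fin (nX + 1)) ℝ,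
        (∀ k, Relaxed (W' k)) ∧ Fobj c p γ w1 w2 Y X W' < δ := by
      intro δ hδ
      obtain ⟨W', hW', hF⟩ := hsmall δ hδ
      exact ⟨fun k => Matrix.transpose (W' k), fun k => Relaxed.transpose (hW' k), by
        rw [Fobj_transpose]; exact hF⟩
    have hA : ∀ i, ∃ j, Y j = X i := by
      intro i
      obtain ⟨k0, hk0⟩ := hXne i
      exact exists_match hc hγ hw1 hw2 hsmall i k0 hk0
    have hB : ∀ j, ∃ i, X i = Y j := by
      intro j
      obtain ⟨k0, hk0⟩ := hYne j
      exact exists_match hc hγ hw1 hw2 hsmallT j k0 hk0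
    choose f hf using hA
    choose g hg using hB
    have hfinj : Function.Injective f := fun a b hab =>
      hXinj (by rw [← hf a, ← hf b, hab])
    have hginj : Function.Injective g := fun a b hab =>
      hYinj (by rw [← hg a, ← hg b, hab])
    have hcard : nX = nY := le_antisymm
      (by simpa using Fintype.card_le_of_injective f hfinj)
      (by simpa using Fintype.card_le_of_injective g hginj)
    have hbij : Function.Bijective f := by
      rw [Fintype.bijective_iff_injective_and_card]
      exact ⟨hfinj, by simp [hcard]⟩
    exact ⟨Equiv.ofBijective f hbij, fun i => hf i⟩
  · rintro ⟨σ, hσ⟩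
    set Wσ : Fin T → Matrix (Fin (nX + 1)) (Fin (nY + 1)) ℝ := fun _ i j =>
      if ∃ i0 : Fin nX, i = i0.castSucc ∧ j = (σ i0).castSucc then (1:ℝ) else 0 with hWσdef
    have hWσ : ∀ k, Relaxed (Wσ k) := by
      intro k
      refine ⟨fun i j => ?_, fun j => ?_, fun i => ?_, ?_⟩
      · simp only [hWσdef]; split_ifs <;> norm_num
      · have hiff : ∀ i : Fin (nX+1),
            (∃ i0 : Fin nX, i = i0.castSucc ∧ j.castSucc = (σ i0).castSucc) ↔
            i = (σ.symm j).castSucc := by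
          intro i
          constructor
          · rintro ⟨i0, rfl, hj⟩
            have : σ i0 = j := Fin.castSucc_injective _ hj.symm
            rw [← this]; simp
          · rintro rfl
            exact ⟨σ.symm j, rfl, by simp⟩
        simp only [hWσdef, hiff]
        simp
      · have hiff : ∀ j : Fin (nY+1),
            (∃ i0 : Fin nX, i.castSucc = i0.castSucc ∧ j = (σ i0).castSucc) ↔
            j = (σ i).castSucc := by
          intro j
          constructor
          · rintro ⟨i0, hi, rfl⟩
            have : i0 = i := Fin.castSucc_injective _ hi.symm
            rw [this]
          · rintro rfl
            exact ⟨i, rfl, rfl⟩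
        simp only [hWσdef, hiff]
        simp
      · have : ¬ ∃ i0 : Fin nX, Fin.last nX = i0.castSucc ∧
            Fin.last nY = (σ i0).castSucc := by
          rintro ⟨i0, hi, -⟩
          exact (Fin.castSucc_lt_last i0).ne' hi
        simp only [hWσdef, this, if_false]
    have hobj0 : obj c p γ w1 w2 X Y Wσ = 0 := by
      rw [obj_eq_Fobj]
      have hF : Fobj c p γ w1 w2 X Y Wσ = 0 := by
        unfold Fobj
        have h1 : ∀ (k : Fin T) (i : Fin (nX+1)) (j : Fin (nY+1)),
            Dmat c p X Y k i j * Wσ k i j = 0 := by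
          intro k i j
          by_cases h : ∃ i0 : Fin nX, i = i0.castSucc ∧ j = (σ i0).castSucc
          · obtain ⟨i0, rfl, rfl⟩ := h
            have : Dmat c p X Y k i0.castSucc (σ i0).castSucc = 0 := by
              simp only [Dmat, extTraj_castSucc, hσ i0, dG_self hc.le]
              exact Real.zero_rpow (by positivity)
            rw [this, zero_mul]
          · have : Wσ k i j = 0 := by simp only [hWσdef, h, if_false]
            rw [this, mul_zero]
        have h2 : ∀ k k' : Fin T, Wσ k = Wσ k' := fun _ _ => rfl
        simp only [h1]
        simp [sub_self, hWσdef]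
      rw [hF]
      exact Real.zero_rpow (by positivity)
    refine le_antisymm ?_ (le_ciInf hobj_nonneg)
    have hbdd : BddBelow (Set.range fun (W : {W : Fin T → Matrix (Fin (nX + 1))
        (Fin (nY + 1)) ℝ // ∀ k, Relaxed (W k)}) => obj c p γ w1 w2 X Y W.1) := by
      refine ⟨0, ?_⟩
      rintro x ⟨W, rfl⟩
      exact hobj_nonneg W
    have := ciInf_le hbdd (⟨Wσ, hWσ⟩ : {W : Fin T → Matrix (Fin (nX + 1))
        (Fin (nY + 1)) ℝ // ∀ k, Relaxed (W k)})
    rw [hobj0] at this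
    exact this
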